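/- Let c be a Coxeter element of Ŝ_n and let ≺ be a c-sortable TITO on Z with waning block M̲ (i.e. not a single waxing block). Then every a ∈ M̲ occurs in some cover reflection of ≺ together with another element of M̲: there exist b ∈ M̲ and a cover reflection t of ≺ with t = (a,b). -/
import Mathlib


open scoped Classical

noncomputable section

/-- A (real) translation-invariant total order on ℤ with period `n`: a strict total
order `≺` on ℤ with `x ≺ y ⟺ x+n ≺ y+n`, having no cover relation `x+n ≺ x`. -/
structure TITO (n : ℕ) where
  lt : ℤ → ℤ → Prop
  lt_irrefl : ∀ x, ¬ lt x x
  lt_trans : ∀ {x y z}, lt x y → lt y z → lt x z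
  lt_total : ∀ x y, x ≠ y → lt x y ∨ lt y x
  invariant : ∀ x y, lt x y ↔ lt (x + n) (y + n)
  real : ∀ x : ℤ, ¬ (lt (x + n) x ∧ ∀ z, ¬ (lt (x + n) z ∧ lt z x))

/-- `y` covers `x` in the order `≺` (they are ≺-consecutive). -/
def TITO.covers {n : ℕ} (T : TITO n) (x y : ℤ) : Prop :=
  T.lt x y ∧ ∀ z, ¬ (T.lt x z ∧ T.lt z y)

/-- `x` lies in `S + nℤ` (e.g. `x ∈ L̄_c` for `S = L_c`). -/
def inBar (n : ℕ) (S : Finset ℤ) (x : ℤ) : Prop := ∃ s ∈ S, (n : ℤ) ∣ (x - s)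

/-- The TITO consists of a single waxing block (the shape `[{0,…,n−1}]` of an affine
permutation): every pair of elements is at finite ≺-distance and `x ≺ x+n`. -/
def IsOneWaxingBlock (n : ℕ) (T : TITO n) : Prop :=
  (∀ x : ℤ, T.lt x (x + n)) ∧
  ∀ x y : ℤ, T.lt x y → {z : ℤ | T.lt x z ∧ T.lt z y}.Finite

/-- The TITO has shape `[L] [M̲] [R]`: the residues mod `n` are partitioned into `L`, `M`,
`R`; the block `L̄` precedes `M̄` precedes `R̄`; `L̄` and `R̄` are waxing blocks, `M̄` is a
waning block; and elements of the same block are at finite ≺-distance. (Blocks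
corresponding to empty parts are absent.) -/
def IsShapeLMR (n : ℕ) (T : TITO n) (L M R : Finset ℤ) : Prop :=
  (L ∪ M ∪ R = Finset.Ico (0 : ℤ) (n : ℤ)) ∧
  Disjoint L M ∧ Disjoint L R ∧ Disjoint M R ∧
  (∀ x y : ℤ, inBar n L x → inBar n M y → T.lt x y) ∧
  (∀ x y : ℤ, inBar n L x → inBar n R y → T.lt x y) ∧
  (∀ x y : ℤ, inBar n M x → inBar n R y → T.lt x y) ∧
  (∀ x : ℤ, inBar n L x ∨ inBar n R x → T.lt x (x + n)) ∧
  (∀ x : ℤ, inBar n M x → T.lt (x + n) x) ∧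
  (∀ x y : ℤ, T.lt x y →
    ((inBar n L x ∧ inBar n L y) ∨ (inBar n M x ∧ inBar n M y) ∨
      (inBar n R x ∧ inBar n R y)) →
    {z : ℤ | T.lt x z ∧ T.lt z y}.Finite)

/-- A `c`-sortable TITO (for the Coxeter element given by the partition `Lc ⊔ Rc` of
`{1,…,n}`): its shape is `[{0,…,n−1}]` or `[L][M̲][R]` with `L ⊆ L_c`, `R ⊆ R_c`,
`M ∩ L_c ≠ ∅ ≠ M ∩ R_c` (as residues), and its one-line notation avoids the patterns
`k ≺ i ≺ j` with `i < j < k`, `j ∈ L̄_c`, and `j ≺ k ≺ i` with `i < j < k`, `j ∈ R̄_c`. -/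
def IsCSortableTITO (n : ℕ) (Lc Rc : Finset ℤ) (T : TITO n) : Prop :=
  (IsOneWaxingBlock n T ∨
    ∃ L M R : Finset ℤ, IsShapeLMR n T L M R ∧
      (∀ x ∈ L, inBar n Lc x) ∧ (∀ x ∈ R, inBar n Rc x) ∧
      (∃ x ∈ M, inBar n Lc x) ∧ (∃ x ∈ M, inBar n Rc x)) ∧
  (¬ ∃ i j k : ℤ, i < j ∧ j < k ∧ inBar n Lc j ∧ T.lt k i ∧ T.lt i j) ∧
  (¬ ∃ i j k : ℤ, i < j ∧ j < k ∧ inBar n Rc j ∧ T.lt j k ∧ T.lt k i)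

/-- The cover reflection `(p,q)` of a TITO: `p < q`, `p ≢ q (mod n)` and `q ≺ p` is a
cover relation. -/
def CoverRefl (n : ℕ) (T : TITO n) (p q : ℤ) : Prop :=
  p < q ∧ ¬ (n : ℤ) ∣ (q - p) ∧ T.covers q p

lemma tito_exists_max {n : ℕ} (T : TITO n) (S : Finset ℤ) :
    S.Nonempty → ∃ z ∈ S, ∀ w ∈ S, w ≠ z → T.lt w z := by
  classical
  induction S using Finset.induction_on with
  | empty => rintro ⟨x, hx⟩; simp at hx
  | @insert a S' haS ih =>
    intro _
    rcases S'.eq_empty_or_nonempty with rfl | hS'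
    · refine ⟨a, Finset.mem_insert_self _ _, ?_⟩
      intro w hw hwa
      simp only [Finset.mem_insert, Finset.notMem_empty, or_false] at hw
      exact absurd hw hwa
    · obtain ⟨z, hzS, hzmax⟩ := ih hS'
      by_cases hza : T.lt z a
      · refine ⟨a, Finset.mem_insert_self _ _, ?_⟩
        intro w hw hwa
        rcases Finset.mem_insert.mp hw with rfl | hw'
        · exact absurd rfl hwa
        · rcases eq_or_ne w z with rfl | hwz
          · exact hza
          · exact T.lt_trans (hzmax w hw' hwz) hza
      · refine ⟨z, Finset.mem_insert_of_mem hzS, ?_⟩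
        intro w hw hwz
        rcases Finset.mem_insert.mp hw with rfl | hw'
        · rcases T.lt_total w z hwz with h | h
          · exact h
          · exact absurd h hza
        · exact hzmax w hw' hwz

lemma tito_exists_min {n : ℕ} (T : TITO n) (S : Finset ℤ) :
    S.Nonempty → ∃ z ∈ S, ∀ w ∈ S, w ≠ z → T.lt z w := by
  classical
  induction S using Finset.induction_on with
  | empty => rintro ⟨x, hx⟩; simp at hx
  | @insert a S' haS ih =>
    intro _
    rcases S'.eq_empty_or_nonempty with rfl | hS'
    · refine ⟨a, Finset.mem_insert_self _ _, ?_⟩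
      intro w hw hwa
      simp only [Finset.mem_insert, Finset.notMem_empty, or_false] at hw
      exact absurd hw hwa
    · obtain ⟨z, hzS, hzmin⟩ := ih hS'
      by_cases hza : T.lt a z
      · refine ⟨a, Finset.mem_insert_self _ _, ?_⟩
        intro w hw hwa
        rcases Finset.mem_insert.mp hw with rfl | hw'
        · exact absurd rfl hwa
        · rcases eq_or_ne w z with rfl | hwz
          · exact hza
          · exact T.lt_trans hza (hzmin w hw' hwz)
      · refine ⟨z, Finset.mem_insert_of_mem hzS, ?_⟩
        intro w hw hwz
        rcases Finset.mem_insert.mp hw with rfl | hw'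
        · rcases T.lt_total z w (fun e => hwz e.symm) with h | h
          · exact h
          · exact absurd h hza
        · exact hzmin w hw' hwz

/- Statement 13: in a c-sortable TITO with a waning block M̄ (i.e. not a single waxing
block), every a ∈ M̄ occurs in a cover reflection together with another element of M̄. -/
theorem statement13 (n : ℕ) (hn : 0 < n) (Lc Rc : Finset ℤ)
    (hdis : Disjoint Lc Rc) (hun : Lc ∪ Rc = Finset.Icc (1 : ℤ) (n : ℤ))
    (hLne : Lc.Nonempty) (hRne : Rc.Nonempty)
    (T : TITO n) (hT : IsCSortableTITO n Lc Rc T)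
    (L M R : Finset ℤ) (hshape : IsShapeLMR n T L M R)
    (hL : ∀ x ∈ L, inBar n Lc x) (hR : ∀ x ∈ R, inBar n Rc x)
    (hML : ∃ x ∈ M, inBar n Lc x) (hMR : ∃ x ∈ M, inBar n Rc x) :
    ∀ a : ℤ, inBar n M a →
      ∃ b : ℤ, inBar n M b ∧ (CoverRefl n T a b ∨ CoverRefl n T b a) := by
  obtain ⟨hun', hdLM, hdLR, hdMR, hLM, hLR, hMRbar, hwax, hwan, hfin⟩ := hshape
  obtain ⟨_, hpat1, hpat2⟩ := hT
  have hn1 : (1:ℤ) ≤ (n:ℤ) := by exact_mod_cast hn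
  have shift : ∀ (S : Finset ℤ) (x t : ℤ), (n:ℤ) ∣ t → inBar n S x → inBar n S (x + t) := by
    rintro S x t ht ⟨s, hs, hd⟩
    refine ⟨s, hs, ?_⟩
    have he : x + t - s = (x - s) + t := by ring
    rw [he]; exact dvd_add hd ht
  have mem3 : ∀ z : ℤ, inBar n L z ∨ inBar n M z ∨ inBar n R z := by
    intro z
    have h0 : (0:ℤ) ≤ z % n := Int.emod_nonneg z (by exact_mod_cast hn.ne')
    have h1 : z % n < n := Int.emod_lt_of_pos z (by exact_mod_cast hn)
    have hmem : z % n ∈ L ∪ M ∪ R := by rw [hun']; exact Finset.mem_Ico.mpr ⟨h0, h1⟩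
    have hdvd : (n:ℤ) ∣ z - z % n := Int.dvd_self_sub_of_emod_eq rfl
    rcases Finset.mem_union.mp hmem with h | h
    · rcases Finset.mem_union.mp h with h | h
      · exact Or.inl ⟨_, h, hdvd⟩
      · exact Or.inr (Or.inl ⟨_, h, hdvd⟩)
    · exact Or.inr (Or.inr ⟨_, h, hdvd⟩)
  have memLR : ∀ z : ℤ, inBar n Lc z ∨ inBar n Rc z := by
    intro z
    have h0 : (0:ℤ) ≤ (z-1) % n := Int.emod_nonneg _ (by exact_mod_cast hn.ne')
    have h1 : (z-1) % n < n := Int.emod_lt_of_pos _ (by exact_mod_cast hn)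
    have hmem : (z-1) % n + 1 ∈ Lc ∪ Rc := by
      rw [hun]; exact Finset.mem_Icc.mpr ⟨by omega, by omega⟩
    have hdvd0 : (n:ℤ) ∣ (z-1) - (z-1) % n := Int.dvd_self_sub_of_emod_eq rfl
    have hdvd : (n:ℤ) ∣ z - ((z-1) % n + 1) := by
      have he : z - ((z-1) % n + 1) = (z-1) - (z-1) % n := by ring
      rw [he]; exact hdvd0
    rcases Finset.mem_union.mp hmem with h | h
    · exact Or.inl ⟨_, h, hdvd⟩
    · exact Or.inr ⟨_, h, hdvd⟩
  have chainN : ∀ x, inBar n M x → ∀ d : ℕ, T.lt (x + ((d:ℤ)+1)*n) x := by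
    intro x hx d
    induction d with
    | zero => simpa using hwan x hx
    | succ d ih =>
      have h1 : T.lt (x + ((d:ℤ)+1)*n + n) (x + n) := (T.invariant _ _).mp ih
      have h2 := T.lt_trans h1 (hwan x hx)
      have he : x + ((d:ℤ)+1)*n + n = x + (((d+1:ℕ):ℤ)+1)*n := by push_cast; ring
      rwa [he] at h2
  have chainZ : ∀ x, inBar n M x → ∀ s : ℤ, 1 ≤ s → T.lt (x + s*n) x := by
    intro x hx s hs
    have h := chainN x hx (s-1).toNat
    have he : ((s-1).toNat : ℤ) + 1 = s := by omega
    rwa [he] at h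
  intro a ha
  have haM1 : inBar n M (a + n) := shift M a n dvd_rfl ha
  have haM2 : inBar n M (a - n) := by
    have h := shift M a (-n) (dvd_neg.mpr dvd_rfl) ha
    have he : a + -(n:ℤ) = a - n := by ring
    rwa [he] at h
  rcases memLR a with hAL | hAR
  · -- case a ∈ L̄c : use the maximum of the interval (a+n, a)
    have hlt : T.lt (a+n) a := hwan a ha
    have hfinS : {z : ℤ | T.lt (a+n) z ∧ T.lt z a}.Finite :=
      hfin (a+n) a hlt (Or.inr (Or.inl ⟨haM1, ha⟩))
    have hneS : ∃ z, T.lt (a+n) z ∧ T.lt z a := by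
      by_contra h
      push_neg at h
      exact T.real a ⟨hlt, fun z hz => h z hz.1 hz.2⟩
    obtain ⟨z0, hz0⟩ := hneS
    obtain ⟨z, hzS, hzmax⟩ := tito_exists_max T hfinS.toFinset
      ⟨z0, hfinS.mem_toFinset.mpr hz0⟩
    simp only [Set.Finite.mem_toFinset, Set.mem_setOf_eq] at hzS
    obtain ⟨hz1, hz2⟩ := hzS
    have hcov : T.covers z a := by
      refine ⟨hz2, fun u hu => ?_⟩
      have huS : u ∈ hfinS.toFinset :=
        hfinS.mem_toFinset.mpr ⟨T.lt_trans hz1 hu.1, hu.2⟩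
      have hune : u ≠ z := fun e => T.lt_irrefl z (e ▸ hu.1)
      exact T.lt_irrefl z (T.lt_trans hu.1 (hzmax u huS hune))
    have hzM : inBar n M z := by
      rcases mem3 z with h | h | h
      · exact absurd (hLM z (a+n) h haM1)
          (fun hc => T.lt_irrefl z (T.lt_trans hc hz1))
      · exact h
      · exact absurd (hMRbar a z ha h)
          (fun hc => T.lt_irrefl z (T.lt_trans hz2 hc))
    have hazlt : a < z := by
      by_contra hle
      have hzne : z ≠ a := fun e => T.lt_irrefl a (e ▸ hz2)
      have hza : z < a := by omega
      apply hpat1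
      refine ⟨z, a, z + (a - z + 1) * n, hza, ?_, hAL, ?_, hz2⟩
      · have h1 : (a - z + 1) ≤ (a - z + 1) * n :=
          le_mul_of_one_le_right (by omega) hn1
        linarith
      · exact chainZ z hzM (a - z + 1) (by omega)
    have hndvd : ¬ (n:ℤ) ∣ (z - a) := by
      rintro ⟨k, hk⟩
      have hk1 : 1 ≤ k := by
        by_contra hk0
        push_neg at hk0
        have h0 : (n:ℤ) * k ≤ (n:ℤ) * 0 :=
          mul_le_mul_of_nonneg_left (by omega) (by linarith)
        simp only [mul_zero] at h0
        linarith
      rcases eq_or_lt_of_le hk1 with hk1' | hk2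
      · have he : z = a + n := by rw [← hk1'] at hk; linarith
        rw [he] at hz1
        exact T.lt_irrefl _ hz1
      · have h2 : T.lt (a + n + (k-1)*n) (a+n) := chainZ (a+n) haM1 (k-1) (by omega)
        have he : a + n + (k-1)*n = z := by linear_combination -hk
        rw [he] at h2
        exact T.lt_irrefl _ (T.lt_trans h2 hz1)
    exact ⟨z, hzM, Or.inl ⟨hazlt, hndvd, hcov⟩⟩
  · -- case a ∈ R̄c : use the minimum of the interval (a, a−n)
    have hea : a - n + n = a := by ring
    have hlt : T.lt a (a - n) := by
      have h := hwan (a-n) haM2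
      rwa [hea] at h
    have hfinS : {z : ℤ | T.lt a z ∧ T.lt z (a-n)}.Finite :=
      hfin a (a-n) hlt (Or.inr (Or.inl ⟨ha, haM2⟩))
    have hneS : ∃ z, T.lt a z ∧ T.lt z (a-n) := by
      by_contra h
      push_neg at h
      apply T.real (a-n)
      refine ⟨by rwa [hea], fun z hz => ?_⟩
      rw [hea] at hz
      exact h z hz.1 hz.2
    obtain ⟨z0, hz0⟩ := hneS
    obtain ⟨w, hwS, hwmin⟩ := tito_exists_min T hfinS.toFinset
      ⟨z0, hfinS.mem_toFinset.mpr hz0⟩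
    simp only [Set.Finite.mem_toFinset, Set.mem_setOf_eq] at hwS
    obtain ⟨hw1, hw2⟩ := hwS
    have hcov : T.covers a w := by
      refine ⟨hw1, fun u hu => ?_⟩
      have huS : u ∈ hfinS.toFinset :=
        hfinS.mem_toFinset.mpr ⟨hu.1, T.lt_trans hu.2 hw2⟩
      have hune : u ≠ w := fun e => T.lt_irrefl w (e ▸ hu.2)
      exact T.lt_irrefl w (T.lt_trans (hwmin u huS hune) hu.2)
    have hwM : inBar n M w := by
      rcases mem3 w with h | h | h
      · exact absurd (hLM w a h ha)
          (fun hc => T.lt_irrefl w (T.lt_trans hc hw1))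
      · exact h
      · exact absurd (hMRbar (a-n) w haM2 h)
          (fun hc => T.lt_irrefl w (T.lt_trans hw2 hc))
    have hwa : w < a := by
      by_contra hle
      have hwne : w ≠ a := fun e => T.lt_irrefl a (e ▸ hw1)
      have haw : a < w := by omega
      apply hpat2
      refine ⟨w - (w - a + 1) * n, a, w, ?_, haw, hAR, hw1, ?_⟩
      · have h1 : (w - a + 1) ≤ (w - a + 1) * n :=
          le_mul_of_one_le_right (by omega) hn1
        linarith
      · have hxM : inBar n M (w - (w - a + 1) * n) := by
          have h := shift M w (-((w - a + 1) * n)) (dvd_neg.mpr (dvd_mul_left _ _)) hwM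
          have he : w + -((w - a + 1) * n) = w - (w - a + 1) * n := by ring
          rwa [he] at h
        have h2 := chainZ (w - (w - a + 1) * n) hxM (w - a + 1) (by omega)
        have he : w - (w - a + 1) * n + (w - a + 1) * n = w := by ring
        rwa [he] at h2
    have hndvd : ¬ (n:ℤ) ∣ (a - w) := by
      rintro ⟨k, hk⟩
      have hk1 : 1 ≤ k := by
        by_contra hk0
        push_neg at hk0
        have h0 : (n:ℤ) * k ≤ (n:ℤ) * 0 :=
          mul_le_mul_of_nonneg_left (by omega) (by linarith)
        simp only [mul_zero] at h0
        linarith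
      rcases eq_or_lt_of_le hk1 with hk1' | hk2
      · have he : a - n = w := by rw [← hk1'] at hk; linarith
        rw [he] at hw2
        exact T.lt_irrefl _ hw2
      · have h2 : T.lt (w + (k-1)*n) w := chainZ w hwM (k-1) (by omega)
        have he : w + (k-1)*n = a - n := by linear_combination -hk
        rw [he] at h2
        exact T.lt_irrefl _ (T.lt_trans hw2 h2)
    exact ⟨w, hwM, Or.inr ⟨hwa, hndvd, hcov⟩⟩

end
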